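/- For every n ∈ ℕ and every composition α, the Schur polynomial satisfies the stability property s_α(X_0,…,X_{n−1}, 0) = s_α(X_0,…,X_{n−2}); here s_α in n variables is defined as a_{δ_n+α}/Δ_n if α ∈ ℕⁿ (where δ_n = (n−1,…,1,0) and Δ_n = a_{δ_n} is the Vandermonde determinant), and 0 if α has a nonzero part beyond index n−1. -/

import Mathlib

open scoped Classical

/-- The alternant `a_α = det(X_i^{α_j})_{i,j<n}`. -/
noncomputable def alternant (n : ℕ) (α : Fin n → ℕ) : MvPolynomial (Fin n) ℤ :=
  Matrix.det (Matrix.of fun i j : Fin n =>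
    (MvPolynomial.X i : MvPolynomial (Fin n) ℤ) ^ α j)

/-- The Vandermonde determinant `Δ_n = a_{δ_n}` with `δ_n = (n-1, …, 1, 0)`. -/
noncomputable def vandermondePoly (n : ℕ) : MvPolynomial (Fin n) ℤ :=
  alternant n (fun i => n - 1 - (i : ℕ))

/-- `s` is the Schur polynomial `s_α` in `n` variables: `a_{δ_n+α}/Δ_n` when
`α ∈ ℕⁿ` (expressed multiplicatively, as `Δ_n` is a nonzerodivisor), and `0`
when `α` has a nonzero part at an index `≥ n`. -/
def IsSchurPoly (n : ℕ) (α : ℕ → ℕ) (s : MvPolynomial (Fin n) ℤ) : Prop :=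
  if ∀ i, n ≤ i → α i = 0 then
    vandermondePoly n * s = alternant n (fun i : Fin n => (n - 1 - (i : ℕ)) + α i)
  else s = 0

open MvPolynomial Matrix in
lemma vandermondePoly_ne_zero (n : ℕ) : vandermondePoly n ≠ 0 := by
  have h : vandermondePoly n
      = ((Matrix.vandermonde (fun i : Fin n => (X i : MvPolynomial (Fin n) ℤ))).submatrix
          id Fin.revPerm).det := by
    unfold vandermondePoly alternant
    congr 1
    ext i j
    simp [Matrix.vandermonde, Fin.val_rev, Nat.sub_sub, Nat.add_comm 1 (j : ℕ)]
  rw [h, Matrix.det_permute']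
  have hv : (Matrix.vandermonde (fun i : Fin n => (X i : MvPolynomial (Fin n) ℤ))).det ≠ 0 :=
    Matrix.det_vandermonde_ne_zero_iff.mpr MvPolynomial.X_injective
  simpa using hv

open MvPolynomial Matrix in
lemma aeval_alternant (n : ℕ) (β : Fin (n + 1) → ℕ) :
    MvPolynomial.aeval (Fin.lastCases 0 MvPolynomial.X) (alternant (n + 1) β)
      = Matrix.det (Matrix.of fun i j : Fin (n + 1) =>
          (Fin.lastCases 0 MvPolynomial.X i : MvPolynomial (Fin n) ℤ) ^ β j) := by
  unfold alternant
  refine (RingHom.map_det (MvPolynomial.aeval (R := ℤ) (Fin.lastCases 0 MvPolynomial.X)).toRingHom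
    (Matrix.of fun i j : Fin (n+1) => (MvPolynomial.X i : MvPolynomial (Fin (n+1)) ℤ) ^ β j)).trans ?_
  congr 1
  ext i j
  simp

open MvPolynomial Matrix in
lemma aeval_alternant_eq_zero (n : ℕ) (β : Fin (n + 1) → ℕ) (hβ : ∀ j, β j ≠ 0) :
    MvPolynomial.aeval (Fin.lastCases 0 MvPolynomial.X) (alternant (n + 1) β)
      = (0 : MvPolynomial (Fin n) ℤ) := by
  rw [aeval_alternant]
  apply Matrix.det_eq_zero_of_row_eq_zero (Fin.last n)
  intro j
  simp [zero_pow (hβ j)]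

open MvPolynomial Matrix in
lemma aeval_alternant_succ (n : ℕ) (β : Fin (n + 1) → ℕ) (hlast : β (Fin.last n) = 0)
    (hβ : ∀ j : Fin n, β j.castSucc ≠ 0) :
    MvPolynomial.aeval (Fin.lastCases 0 MvPolynomial.X) (alternant (n + 1) β)
      = alternant n (fun j => β j.castSucc) := by
  rw [aeval_alternant, Matrix.det_succ_row _ (Fin.last n),
    Finset.sum_eq_single (Fin.last n)]
  · have h1 : ((-1 : MvPolynomial (Fin n) ℤ)) ^ ((Fin.last n : ℕ) + (Fin.last n : ℕ)) = 1 :=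
      Even.neg_one_pow ⟨n, by simp [Fin.val_last]⟩
    rw [h1, one_mul]
    have h2 : (Matrix.of fun i j : Fin (n + 1) =>
        (Fin.lastCases 0 MvPolynomial.X i : MvPolynomial (Fin n) ℤ) ^ β j)
        (Fin.last n) (Fin.last n) = 1 := by
      simp [hlast]
    rw [h2, one_mul]
    unfold alternant
    congr 1
    ext i j
    simp [Fin.succAbove_last]
  · intro j _ hj
    obtain ⟨j', rfl⟩ := Fin.exists_castSucc_eq.mpr hj
    have : (Matrix.of fun i j : Fin (n + 1) =>
        (Fin.lastCases 0 MvPolynomial.X i : MvPolynomial (Fin n) ℤ) ^ β j)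
        (Fin.last n) j'.castSucc = 0 := by
      simp [zero_pow (hβ j')]
    rw [this, mul_zero, zero_mul]
  · intro h
    exact absurd (Finset.mem_univ _) h

open MvPolynomial Matrix in
lemma alternant_add_one (n : ℕ) (γ : Fin n → ℕ) :
    alternant n (fun j => γ j + 1)
      = (∏ i, (MvPolynomial.X i : MvPolynomial (Fin n) ℤ)) * alternant n γ := by
  unfold alternant
  rw [show (Matrix.of fun i j : Fin n => (MvPolynomial.X i : MvPolynomial (Fin n) ℤ) ^ (γ j + 1))
      = Matrix.of fun i j : Fin n => (MvPolynomial.X i : MvPolynomial (Fin n) ℤ) *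
        (Matrix.of fun i j : Fin n => (MvPolynomial.X i : MvPolynomial (Fin n) ℤ) ^ γ j) i j from by
    ext i j; simp only [Matrix.of_apply]; rw [pow_succ, mul_comm]]
  exact Matrix.det_mul_column _ _

lemma alternant_congr {n : ℕ} {f g : Fin n → ℕ} (h : ∀ j, f j = g j) :
    alternant n f = alternant n g :=
  congrArg (alternant n) (funext h)

/-- Stability of Schur polynomials under setting the last variable to `0`. -/
theorem schur_polynomial_stability (n : ℕ) (α : ℕ → ℕ)
    (s₁ : MvPolynomial (Fin (n + 1)) ℤ) (s₀ : MvPolynomial (Fin n) ℤ)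
    (h₁ : IsSchurPoly (n + 1) α s₁) (h₀ : IsSchurPoly n α s₀) :
    MvPolynomial.aeval (Fin.lastCases 0 MvPolynomial.X) s₁ = s₀ := by
  have hXprod : (∏ i, (MvPolynomial.X i : MvPolynomial (Fin n) ℤ)) ≠ 0 :=
    Finset.prod_ne_zero_iff.mpr fun i _ => MvPolynomial.X_ne_zero i
  have hc : (∏ i, (MvPolynomial.X i : MvPolynomial (Fin n) ℤ)) * vandermondePoly n ≠ 0 :=
    mul_ne_zero hXprod (vandermondePoly_ne_zero n)
  have hΔ : MvPolynomial.aeval (Fin.lastCases 0 MvPolynomial.X) (vandermondePoly (n + 1))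
      = (∏ i, (MvPolynomial.X i : MvPolynomial (Fin n) ℤ)) * vandermondePoly n := by
    unfold vandermondePoly
    rw [aeval_alternant_succ n _ (by simp) (fun j => by
      have := j.isLt; simp only [Fin.coe_castSucc]; omega)]
    rw [show (fun j : Fin n => n + 1 - 1 - ((j.castSucc : ℕ)))
        = fun j : Fin n => (n - 1 - (j : ℕ)) + 1 from funext fun j => by
      have := j.isLt; simp only [Fin.coe_castSucc]; omega]
    exact alternant_add_one n _
  unfold IsSchurPoly at h₁ h₀
  by_cases h : ∀ i, n ≤ i → α i = 0
  · have h' : ∀ i, n + 1 ≤ i → α i = 0 := fun i hi => h i (Nat.le_of_succ_le hi)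
    rw [if_pos h'] at h₁
    rw [if_pos h] at h₀
    have key := congrArg (MvPolynomial.aeval (R := ℤ) (Fin.lastCases 0 MvPolynomial.X : Fin (n+1) → MvPolynomial (Fin n) ℤ)) h₁
    rw [map_mul, hΔ] at key
    have hR : MvPolynomial.aeval (Fin.lastCases 0 MvPolynomial.X)
        (alternant (n + 1) (fun i : Fin (n + 1) => (n + 1 - 1 - (i : ℕ)) + α i))
        = (∏ i, (MvPolynomial.X i : MvPolynomial (Fin n) ℤ)) *
          alternant n (fun i : Fin n => (n - 1 - (i : ℕ)) + α i) := by
      rw [aeval_alternant_succ n _ (by simp [h n le_rfl]) (fun j => by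
        have := j.isLt; simp only [Fin.coe_castSucc]; omega)]
      rw [show (fun j : Fin n => (n + 1 - 1 - ((j.castSucc : ℕ))) + α j.castSucc)
          = fun j : Fin n => ((n - 1 - (j : ℕ)) + α (j : ℕ)) + 1 from funext fun j => by
        have := j.isLt; simp only [Fin.coe_castSucc]; omega]
      exact alternant_add_one n _
    rw [hR, ← h₀, mul_assoc] at key
    exact mul_left_cancel₀ (vandermondePoly_ne_zero n) (mul_left_cancel₀ hXprod key)
  · rw [if_neg h] at h₀
    subst h₀
    by_cases h' : ∀ i, n + 1 ≤ i → α i = 0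
    · rw [if_pos h'] at h₁
      push_neg at h
      obtain ⟨i, hi, hαi⟩ := h
      have hin : i = n := by
        rcases Nat.lt_or_ge i (n + 1) with hl | hl
        · omega
        · exact absurd (h' i hl) hαi
      have hαn : α n ≠ 0 := hin ▸ hαi
      have key := congrArg (MvPolynomial.aeval (R := ℤ) (Fin.lastCases 0 MvPolynomial.X : Fin (n+1) → MvPolynomial (Fin n) ℤ)) h₁
      rw [map_mul, hΔ] at key
      have hz : MvPolynomial.aeval (Fin.lastCases 0 MvPolynomial.X)
          (alternant (n + 1) (fun i : Fin (n + 1) => (n + 1 - 1 - (i : ℕ)) + α i))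
          = (0 : MvPolynomial (Fin n) ℤ) := by
        apply aeval_alternant_eq_zero
        intro j
        rcases eq_or_ne j (Fin.last n) with rfl | hj
        · simpa using hαn
        · obtain ⟨j', rfl⟩ := Fin.exists_castSucc_eq.mpr hj
          have := j'.isLt; simp only [Fin.coe_castSucc]; omega
      rw [hz] at key
      exact (mul_eq_zero.mp key).resolve_left hc
    · rw [if_neg h'] at h₁
      subst h₁
      simp
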